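/- Let c : ℝ → ℝ be continuously differentiable with c(θ) > 0 and c'(θ) ≥ 0 for all θ, let T > 0, and let u : ℝ × ℝ → ℝ be twice continuously differentiable solving u_tt = c(u)² u_xx on [0,T] × ℝ. Let t ∈ (0,T] and let x₊ : [0,t] → ℝ be differentiable with x₊'(τ) = +c(u(τ, x₊(τ))) for all τ ∈ [0,t]. Then the function τ ↦ S(τ, x₊(τ)) / √( c(u(τ, x₊(τ))) ) is nonincreasing (antitone) on [0,t], where S := u_t − c(u)u_x. -/

import Mathlib

open Set


/-- Partial derivative in the first (time) variable. -/
noncomputable def pdt (u : ℝ × ℝ → ℝ) : ℝ × ℝ → ℝ :=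
  fun p => deriv (fun s => u (s, p.2)) p.1

/-- Partial derivative in the second (space) variable. -/
noncomputable def pdx (u : ℝ × ℝ → ℝ) : ℝ × ℝ → ℝ :=
  fun p => deriv (fun y => u (p.1, y)) p.2

/-- The Riemann variable `R = u_t + c(u) u_x`. -/
noncomputable def Rv (c : ℝ → ℝ) (u : ℝ × ℝ → ℝ) : ℝ × ℝ → ℝ :=
  fun p => pdt u p + c (u p) * pdx u p

/-- The Riemann variable `S = u_t - c(u) u_x`. -/
noncomputable def Sv (c : ℝ → ℝ) (u : ℝ × ℝ → ℝ) : ℝ × ℝ → ℝ :=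
  fun p => pdt u p - c (u p) * pdx u p
lemma pdt_eq_fderiv {u : ℝ × ℝ → ℝ} (hu : Differentiable ℝ u) (p : ℝ × ℝ) :
    pdt u p = fderiv ℝ u p (1, 0) := by
  have h1 : HasDerivAt (fun s : ℝ => (s, p.2)) ((1:ℝ), (0:ℝ)) p.1 :=
    (hasDerivAt_id p.1).prodMk (hasDerivAt_const p.1 p.2)
  have h2 : HasFDerivAt u (fderiv ℝ u p) (p.1, p.2) := by
    simpa using (hu p).hasFDerivAt
  simpa [pdt, Function.comp_def] using (h2.comp_hasDerivAt p.1 h1).deriv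

lemma pdx_eq_fderiv {u : ℝ × ℝ → ℝ} (hu : Differentiable ℝ u) (p : ℝ × ℝ) :
    pdx u p = fderiv ℝ u p (0, 1) := by
  have h1 : HasDerivAt (fun y : ℝ => (p.1, y)) ((0:ℝ), (1:ℝ)) p.2 :=
    (hasDerivAt_const p.2 p.1).prodMk (hasDerivAt_id p.2)
  have h2 : HasFDerivAt u (fderiv ℝ u p) (p.1, p.2) := by
    simpa using (hu p).hasFDerivAt
  simpa [pdx, Function.comp_def] using (h2.comp_hasDerivAt p.2 h1).deriv

lemma pdtpdt_eq {u : ℝ × ℝ → ℝ} (hu : ContDiff ℝ 2 u) (p : ℝ × ℝ) :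
    pdt (pdt u) p = fderiv ℝ (fderiv ℝ u) p (1, 0) (1, 0) := by
  have hud : Differentiable ℝ u := hu.differentiable (by norm_num)
  have hDu : ContDiff ℝ 1 (fderiv ℝ u) := hu.fderiv_right (le_refl 2)
  have h1 : HasDerivAt (fun s : ℝ => (s, p.2)) ((1:ℝ), (0:ℝ)) p.1 :=
    (hasDerivAt_id p.1).prodMk (hasDerivAt_const p.1 p.2)
  have h2 : HasFDerivAt (fderiv ℝ u) (fderiv ℝ (fderiv ℝ u) p) (p.1, p.2) := by
    simpa using (hDu.differentiable one_ne_zero p).hasFDerivAt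
  have h4 : HasDerivAt (fun s => fderiv ℝ u (s, p.2) (1, 0))
      (fderiv ℝ (fderiv ℝ u) p (1, 0) (1, 0)) p.1 := by
    have h3 := (h2.comp_hasDerivAt p.1 h1)
    have h5 := h3.clm_apply (hasDerivAt_const p.1 ((1:ℝ), (0:ℝ)))
    simpa using h5
  rw [pdt]
  rw [show (fun s => pdt u ((s : ℝ), p.2)) = fun s => fderiv ℝ u (s, p.2) (1, 0) from
    funext fun s => pdt_eq_fderiv hud (s, p.2)]
  exact h4.deriv

lemma pdxpdx_eq {u : ℝ × ℝ → ℝ} (hu : ContDiff ℝ 2 u) (p : ℝ × ℝ) :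
    pdx (pdx u) p = fderiv ℝ (fderiv ℝ u) p (0, 1) (0, 1) := by
  have hud : Differentiable ℝ u := hu.differentiable (by norm_num)
  have hDu : ContDiff ℝ 1 (fderiv ℝ u) := hu.fderiv_right (le_refl 2)
  have h1 : HasDerivAt (fun y : ℝ => (p.1, y)) ((0:ℝ), (1:ℝ)) p.2 :=
    (hasDerivAt_const p.2 p.1).prodMk (hasDerivAt_id p.2)
  have h2 : HasFDerivAt (fderiv ℝ u) (fderiv ℝ (fderiv ℝ u) p) (p.1, p.2) := by
    simpa using (hDu.differentiable one_ne_zero p).hasFDerivAt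
  have h4 : HasDerivAt (fun y => fderiv ℝ u (p.1, y) (0, 1))
      (fderiv ℝ (fderiv ℝ u) p (0, 1) (0, 1)) p.2 := by
    have h3 := (h2.comp_hasDerivAt p.2 h1)
    have h5 := h3.clm_apply (hasDerivAt_const p.2 ((0:ℝ), (1:ℝ)))
    simpa using h5
  rw [pdx]
  rw [show (fun y => pdx u (p.1, (y : ℝ))) = fun y => fderiv ℝ u (p.1, y) (0, 1) from
    funext fun y => pdx_eq_fderiv hud (p.1, y)]
  exact h4.deriv

lemma clm_split (L : ℝ × ℝ →L[ℝ] ℝ) (a : ℝ) : L (1, a) = L (1, 0) + a * L (0, 1) := by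
  have h : ((1:ℝ), a) = ((1:ℝ), (0:ℝ)) + a • ((0:ℝ), (1:ℝ)) := by
    simp [Prod.ext_iff]
  rw [h, map_add, map_smul, smul_eq_mul]

lemma clm_split2 (L : ℝ × ℝ →L[ℝ] (ℝ × ℝ →L[ℝ] ℝ)) (a : ℝ) (w : ℝ × ℝ) :
    L (1, a) w = L (1, 0) w + a * L (0, 1) w := by
  have h : ((1:ℝ), a) = ((1:ℝ), (0:ℝ)) + a • ((0:ℝ), (1:ℝ)) := by
    simp [Prod.ext_iff]
  rw [h, map_add, map_smul]
  simp

theorem stmt5 (c : ℝ → ℝ) (u : ℝ × ℝ → ℝ) (T t : ℝ) (xp : ℝ → ℝ)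
    (hc : ContDiff ℝ 1 c)
    (hcpos : ∀ θ, 0 < c θ)
    (hcmono : ∀ θ, 0 ≤ deriv c θ)
    (hT : 0 < T)
    (hu : ContDiff ℝ 2 u)
    (hwave : ∀ p : ℝ × ℝ, p.1 ∈ Set.Icc 0 T →
      pdt (pdt u) p = (c (u p)) ^ 2 * pdx (pdx u) p)
    (ht : t ∈ Set.Ioc 0 T)
    (hxp : ∀ τ ∈ Set.Icc 0 t, HasDerivAt xp (c (u (τ, xp τ))) τ) :
    AntitoneOn (fun τ => Sv c u (τ, xp τ) / Real.sqrt (c (u (τ, xp τ)))) (Set.Icc 0 t) := by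
  obtain ⟨ht0, htT⟩ := ht
  have hud : Differentiable ℝ u := hu.differentiable (by norm_num)
  have hDu : ContDiff ℝ 1 (fderiv ℝ u) := hu.fderiv_right (le_refl 2)
  have hcd : Differentiable ℝ c := hc.differentiable one_ne_zero
  have key : ∀ τ ∈ Icc 0 t,
      HasDerivAt (fun σ => Sv c u (σ, xp σ) / Real.sqrt (c (u (σ, xp σ))))
        (-(deriv c (u (τ, xp τ)) * (Rv c u (τ, xp τ))^2) /
          (2 * Real.sqrt (c (u (τ, xp τ))) * c (u (τ, xp τ)))) τ := by
    intro τ hτ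
    set p : ℝ × ℝ := (τ, xp τ) with hp
    have hτT : τ ∈ Icc 0 T := ⟨hτ.1, hτ.2.trans htT⟩
    set cv : ℝ := c (u p) with hcv
    set cp : ℝ := deriv c (u p) with hcp
    have hγ : HasDerivAt (fun σ => ((σ : ℝ), xp σ)) ((1:ℝ), cv) τ :=
      (hasDerivAt_id τ).prodMk (hxp τ hτ)
    have hU : HasDerivAt (fun σ => u (σ, xp σ)) (fderiv ℝ u p (1, cv)) τ :=
      (hud p).hasFDerivAt.comp_hasDerivAt τ hγ
    have hB : HasDerivAt (fun σ => fderiv ℝ u (σ, xp σ))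
        (fderiv ℝ (fderiv ℝ u) p (1, cv)) τ :=
      (hDu.differentiable one_ne_zero p).hasFDerivAt.comp_hasDerivAt τ hγ
    have hPt : HasDerivAt (fun σ => fderiv ℝ u (σ, xp σ) (1, 0))
        (fderiv ℝ (fderiv ℝ u) p (1, cv) (1, 0)) τ := by
      simpa using hB.clm_apply (hasDerivAt_const τ ((1:ℝ), (0:ℝ)))
    have hPx : HasDerivAt (fun σ => fderiv ℝ u (σ, xp σ) (0, 1))
        (fderiv ℝ (fderiv ℝ u) p (1, cv) (0, 1)) τ := by
      simpa using hB.clm_apply (hasDerivAt_const τ ((0:ℝ), (1:ℝ)))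
    have hcU : HasDerivAt (fun σ => c (u (σ, xp σ))) (cp * fderiv ℝ u p (1, cv)) τ :=
      (hcd (u p)).hasDerivAt.comp τ hU
    have hS : HasDerivAt (fun σ => Sv c u (σ, xp σ))
        (fderiv ℝ (fderiv ℝ u) p (1, cv) (1, 0) -
          (cp * fderiv ℝ u p (1, cv) * fderiv ℝ u p (0, 1) +
            cv * fderiv ℝ (fderiv ℝ u) p (1, cv) (0, 1))) τ := by
      have h := hPt.sub (hcU.mul hPx)
      have hfun : (fun σ => Sv c u (σ, xp σ)) =
          fun σ => fderiv ℝ u (σ, xp σ) (1, 0) -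
            c (u (σ, xp σ)) * fderiv ℝ u (σ, xp σ) (0, 1) :=
        funext fun σ => by rw [Sv, pdt_eq_fderiv hud, pdx_eq_fderiv hud]
      rw [hfun]
      exact h
    have hq : (0:ℝ) < Real.sqrt cv := Real.sqrt_pos.mpr (hcpos _)
    have hq2 : Real.sqrt cv ^ 2 = cv := Real.sq_sqrt (hcpos _).le
    have hsq : HasDerivAt (fun σ => Real.sqrt (c (u (σ, xp σ))))
        (cp * fderiv ℝ u p (1, cv) / (2 * Real.sqrt cv)) τ :=
      hcU.sqrt (hcpos _).ne'
    have hdiv := hS.div hsq hq.ne'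
    refine hdiv.congr_deriv ?_
    symm
    -- value equality
    have hsymm : fderiv ℝ (fderiv ℝ u) p (0, 1) (1, 0) =
        fderiv ℝ (fderiv ℝ u) p (1, 0) (0, 1) :=
      (hu.contDiffAt.isSymmSndFDerivAt (by norm_num)) _ _
    have hwv : fderiv ℝ (fderiv ℝ u) p (1, 0) (1, 0) =
        cv ^ 2 * fderiv ℝ (fderiv ℝ u) p (0, 1) (0, 1) := by
      have := hwave p hτT
      rwa [pdtpdt_eq hu, pdxpdx_eq hu] at this
    have hRval : Rv c u p = fderiv ℝ u p (1, 0) + cv * fderiv ℝ u p (0, 1) := by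
      rw [Rv, pdt_eq_fderiv hud, pdx_eq_fderiv hud]
    have hSval : Sv c u p = fderiv ℝ u p (1, 0) - cv * fderiv ℝ u p (0, 1) := by
      rw [Sv, pdt_eq_fderiv hud, pdx_eq_fderiv hud]
    rw [hRval, hSval, clm_split (fderiv ℝ u p) cv,
      clm_split2 (fderiv ℝ (fderiv ℝ u) p) cv ((1:ℝ),(0:ℝ)),
      clm_split2 (fderiv ℝ (fderiv ℝ u) p) cv ((0:ℝ),(1:ℝ)), hsymm, hwv]
    set q := Real.sqrt cv
    set A := fderiv ℝ u p (1, 0)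
    set Bx := fderiv ℝ u p (0, 1)
    set m := fderiv ℝ (fderiv ℝ u) p (1, 0) (0, 1)
    set w := fderiv ℝ (fderiv ℝ u) p (0, 1) (0, 1)
    rw [← hq2]
    field_simp
    ring
  have hmain := antitoneOn_of_deriv_nonpos (convex_Icc (0:ℝ) t)
    (fun τ hτ => ((key τ hτ).continuousAt).continuousWithinAt)
    (fun τ hτ => by
      rw [interior_Icc] at hτ
      exact ((key τ (Ioo_subset_Icc_self hτ)).differentiableAt).differentiableWithinAt)
    (fun τ hτ => by
      rw [interior_Icc] at hτ
      rw [(key τ (Ioo_subset_Icc_self hτ)).deriv]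
      apply div_nonpos_of_nonpos_of_nonneg
      · have := hcmono (u (τ, xp τ))
        nlinarith [sq_nonneg (Rv c u (τ, xp τ))]
      · have h1 := Real.sqrt_nonneg (c (u (τ, xp τ)))
        have h2 := (hcpos (u (τ, xp τ))).le
        positivity)
  exact hmain
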